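/- Let (Ω, ℱ, ℙ) be a probability space with a filtration (ℱ_k)_{k∈ℕ}, let η' ∈ [0,1) and C_L ≥ 0 be constants, and let (V_k)_{k∈ℕ} be nonnegative random variables such that V_k is ℱ_k-measurable for each k, V₀ is almost surely equal to a constant v₀ ≥ 0, and for every k ≥ 1 one has E[exp(V_k) | ℱ_{k−1}] ≤ exp(η' V_{k−1} + C_L) almost surely. For η > 0 set κ = η/(1−η'). Then: (i) for every η > 0 and p > 0 with ηp ≤ 1 and every n ∈ ℕ, E exp(ηp V_n) ≤ exp(pη(η')ⁿ v₀ + pκ C_L); and (ii) for every η > 0 and p > 0 with κp ≤ 1 and every n ∈ ℕ, E exp(ηp Σ_{k=0}^n V_k) ≤ exp(pκ v₀ + pκ C_L n). -/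

import Mathlib

open MeasureTheory
open scoped ENNReal

private lemma exp_convex_aux {γ x : ℝ} (h0 : 0 ≤ γ) (h1 : γ ≤ 1) :
    Real.exp (γ * x) ≤ (1 - γ) + γ * Real.exp x := by
  have h := convexOn_exp.2 (Set.mem_univ (0:ℝ)) (Set.mem_univ x)
    (by linarith : (0:ℝ) ≤ 1 - γ) h0 (by ring)
  simpa using h

private lemma exp_mul_integrable {Ω : Type*} {m0 : MeasurableSpace Ω} {ℙ : Measure Ω}
    {X : Ω → ℝ} (hX0 : ∀ ω, 0 ≤ X ω) (hX_sm : AEStronglyMeasurable X ℙ)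
    (hXint : Integrable (fun ω => Real.exp (X ω)) ℙ) {c : ℝ} (hc1 : c ≤ 1) :
    Integrable (fun ω => Real.exp (c * X ω)) ℙ := by
  refine hXint.mono' (Real.continuous_exp.comp_aestronglyMeasurable (hX_sm.const_mul c)) ?_
  refine Filter.Eventually.of_forall fun ω => ?_
  rw [Real.norm_eq_abs, Real.abs_exp]
  exact Real.exp_le_exp.2 (mul_le_of_le_one_left (hX0 ω) hc1)

private lemma integrable_bdd_mul {Ω : Type*} {m0 : MeasurableSpace Ω} {ℙ : Measure Ω}
    {f g : Ω → ℝ} (hg : Integrable g ℙ) (hf : AEStronglyMeasurable f ℙ)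
    (B : ℝ) (h0 : ∀ ω, 0 ≤ f ω) (hB : ∀ ω, f ω ≤ B) :
    Integrable (fun ω => f ω * g ω) ℙ :=
  hg.bdd_mul hf (c := B) (Filter.Eventually.of_forall fun ω => by rw [Real.norm_eq_abs, abs_of_nonneg (h0 ω)]; exact hB ω)

/-- The key one-step conditional bound: conditional Jensen obtained from convexity of `exp`
together with the pull-out property. -/
private lemma step_lemma {Ω : Type*} {m0 : MeasurableSpace Ω} (ℙ : Measure Ω)
    [IsProbabilityMeasure ℙ] {m : MeasurableSpace Ω} (hm : m ≤ m0)
    {η' C_L : ℝ} (hη'0 : 0 ≤ η') (hη'1 : η' ≤ 1) (hCL : 0 ≤ C_L)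
    {W X : Ω → ℝ} (hW0 : ∀ ω, 0 ≤ W ω) (hX0 : ∀ ω, 0 ≤ X ω)
    (hW_sm : StronglyMeasurable[m] W) (hX_sm : AEStronglyMeasurable[m0] X ℙ)
    (hWint : Integrable (fun ω => Real.exp (W ω)) ℙ)
    (hXint : Integrable (fun ω => Real.exp (X ω)) ℙ)
    (hrec : ∀ᵐ ω ∂ℙ, (ℙ[fun ω' => Real.exp (X ω') | m]) ω ≤ Real.exp (η' * W ω + C_L))
    {γ : ℝ} (hγ0 : 0 < γ) (hγ1 : γ ≤ 1)
    {f : Ω → ℝ} (hf_sm : StronglyMeasurable[m] f) (hf0 : ∀ ω, 0 ≤ f ω)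
    {B : ℝ} (hfB : ∀ ω, f ω ≤ B) :
    ∫ ω, f ω * Real.exp (γ * X ω) ∂ℙ ≤
      Real.exp (γ * C_L) * ∫ ω, f ω * Real.exp (γ * η' * W ω) ∂ℙ := by
  set u : Ω → ℝ := fun ω => η' * W ω + C_L with hu_def
  have hu0 : ∀ ω, 0 ≤ u ω := fun ω => add_nonneg (mul_nonneg hη'0 (hW0 ω)) hCL
  have hu_sm : StronglyMeasurable[m] u := (hW_sm.const_mul η').add_const C_L
  have hu_sm0 : StronglyMeasurable[m0] u := hu_sm.mono hm
  have hf_sm0 : AEStronglyMeasurable[m0] f ℙ := (hf_sm.mono hm).aestronglyMeasurable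
  -- integrabilities
  have hgint : Integrable (fun ω => Real.exp (γ * X ω)) ℙ :=
    exp_mul_integrable hX0 hX_sm hXint hγ1
  have huint : Integrable (fun ω => Real.exp (u ω)) ℙ := by
    refine ((hWint.const_mul (Real.exp C_L)).mono'
      (Real.continuous_exp.comp_stronglyMeasurable hu_sm0).aestronglyMeasurable ?_)
    refine Filter.Eventually.of_forall fun ω => ?_
    rw [Real.norm_eq_abs, Real.abs_exp, hu_def, ← Real.exp_add]
    refine Real.exp_le_exp.2 ?_
    show η' * W ω + C_L ≤ C_L + W ω
    have h1 : η' * W ω ≤ W ω := mul_le_of_le_one_left (hW0 ω) hη'1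
    linarith
  have hγu_int : Integrable (fun ω => Real.exp (γ * u ω)) ℙ :=
    exp_mul_integrable hu0 hu_sm0.aestronglyMeasurable huint hγ1
  set g2 : Ω → ℝ := fun ω => γ * Real.exp ((γ - 1) * u ω) with hg2_def
  have hg2_sm : StronglyMeasurable[m] g2 :=
    (Real.continuous_exp.comp_stronglyMeasurable (hu_sm.const_mul (γ - 1))).const_mul γ
  have hg2_nonneg : ∀ ω, 0 ≤ g2 ω := fun ω => by positivity
  set R1 : Ω → ℝ := fun ω => (1 - γ) * Real.exp (γ * u ω) with hR1_def
  set R2 : Ω → ℝ := fun ω => g2 ω * Real.exp (X ω) with hR2_def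
  have hR1_sm : StronglyMeasurable[m] R1 :=
    (Real.continuous_exp.comp_stronglyMeasurable (hu_sm.const_mul γ)).const_mul (1 - γ)
  have hR1int : Integrable R1 ℙ := hγu_int.const_mul (1 - γ)
  have hR2int : Integrable R2 ℙ := by
    have h2int : Integrable (fun ω => Real.exp ((γ - 1) * u ω) * Real.exp (X ω)) ℙ := by
      refine hXint.mono' (((Real.continuous_exp.comp_stronglyMeasurable
        (hu_sm0.const_mul (γ - 1))).aestronglyMeasurable).mul hXint.aestronglyMeasurable) ?_
      refine Filter.Eventually.of_forall fun ω => ?_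
      rw [Real.norm_eq_abs, abs_of_nonneg (by positivity)]
      have h1 : Real.exp ((γ - 1) * u ω) ≤ 1 := by
        have h0 : (γ - 1) * u ω ≤ 0 := mul_nonpos_of_nonpos_of_nonneg (by linarith) (hu0 ω)
        simpa using Real.exp_le_exp.2 h0
      exact mul_le_of_le_one_left (Real.exp_pos _).le h1
    have := h2int.const_mul γ
    simpa only [hR2_def, hg2_def, mul_assoc] using this
  -- pointwise convexity estimate
  have hptwise : ∀ ω, Real.exp (γ * X ω) ≤ (R1 + R2) ω := by
    intro ω
    show Real.exp (γ * X ω) ≤ R1 ω + R2 ω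
    have h := exp_convex_aux hγ0.le hγ1 (x := X ω - u ω)
    have hpos := (Real.exp_pos (γ * u ω)).le
    have e0 : Real.exp (γ * X ω) = Real.exp (γ * (X ω - u ω)) * Real.exp (γ * u ω) := by
      rw [← Real.exp_add]; ring_nf
    have e1 : Real.exp (X ω - u ω) * Real.exp (γ * u ω) =
        Real.exp ((γ - 1) * u ω) * Real.exp (X ω) := by
      rw [← Real.exp_add, ← Real.exp_add]; ring_nf
    calc Real.exp (γ * X ω) = Real.exp (γ * (X ω - u ω)) * Real.exp (γ * u ω) := e0
      _ ≤ ((1 - γ) + γ * Real.exp (X ω - u ω)) * Real.exp (γ * u ω) :=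
          mul_le_mul_of_nonneg_right h hpos
      _ = (1 - γ) * Real.exp (γ * u ω) +
          γ * (Real.exp (X ω - u ω) * Real.exp (γ * u ω)) := by ring
      _ = R1 ω + R2 ω := by rw [e1, hR1_def, hR2_def, hg2_def]; ring
  have hgint' : Integrable (fun ω => Real.exp (γ * X ω)) ℙ := hgint
  have hRint : Integrable (R1 + R2) ℙ := hR1int.add hR2int
  have hmono : ℙ[fun ω => Real.exp (γ * X ω)|m] ≤ᵐ[ℙ] ℙ[R1 + R2|m] :=
    condExp_mono hgint' hRint (Filter.Eventually.of_forall hptwise)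
  have hadd : ℙ[R1 + R2|m] =ᵐ[ℙ] ℙ[R1|m] + ℙ[R2|m] := condExp_add hR1int hR2int m
  have hR1eq : ℙ[R1|m] = R1 := condExp_of_stronglyMeasurable hm hR1_sm hR1int
  have hmul : ℙ[R2|m] =ᵐ[ℙ] fun ω => g2 ω * (ℙ[fun ω' => Real.exp (X ω')|m]) ω := by
    have h := condExp_mul_of_stronglyMeasurable_left (μ := ℙ) hg2_sm
      (show Integrable (g2 * fun ω => Real.exp (X ω)) ℙ from hR2int) hXint
    exact h
  -- conditional Jensen conclusion
  have hJensen : ∀ᵐ ω ∂ℙ, (ℙ[fun ω' => Real.exp (γ * X ω')|m]) ω ≤ Real.exp (γ * u ω) := by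
    filter_upwards [hmono, hadd, hmul, hrec] with ω h1 h2 h3 h4
    have e2 : Real.exp ((γ - 1) * u ω) * Real.exp (η' * W ω + C_L) = Real.exp (γ * u ω) := by
      rw [← Real.exp_add, hu_def]; ring_nf
    have hle : g2 ω * (ℙ[fun ω' => Real.exp (X ω')|m]) ω ≤ γ * Real.exp (γ * u ω) := by
      calc g2 ω * (ℙ[fun ω' => Real.exp (X ω')|m]) ω
          ≤ g2 ω * Real.exp (η' * W ω + C_L) := mul_le_mul_of_nonneg_left h4 (hg2_nonneg ω)
        _ = γ * Real.exp (γ * u ω) := by rw [hg2_def]; show γ * Real.exp ((γ-1) * u ω) * Real.exp (η' * W ω + C_L) = _; rw [mul_assoc, e2]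
    have hp2 : (ℙ[R1 + R2|m]) ω = (ℙ[R1|m]) ω + (ℙ[R2|m]) ω := by
      rw [h2]; rfl
    have hp1 : (ℙ[R1|m]) ω = (1 - γ) * Real.exp (γ * u ω) := by rw [hR1eq]
    calc (ℙ[fun ω' => Real.exp (γ * X ω')|m]) ω ≤ (ℙ[R1 + R2|m]) ω := h1
      _ = (1 - γ) * Real.exp (γ * u ω) + g2 ω * (ℙ[fun ω' => Real.exp (X ω')|m]) ω := by
          rw [hp2, hp1, h3]
      _ ≤ (1 - γ) * Real.exp (γ * u ω) + γ * Real.exp (γ * u ω) := by linarith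
      _ = Real.exp (γ * u ω) := by ring
  -- integral chain
  have hfg_int : Integrable (fun ω => f ω * Real.exp (γ * X ω)) ℙ :=
    integrable_bdd_mul hgint hf_sm0 B hf0 hfB
  have h_eq1 : ∫ ω, f ω * Real.exp (γ * X ω) ∂ℙ
      = ∫ ω, f ω * (ℙ[fun ω' => Real.exp (γ * X ω')|m]) ω ∂ℙ := by
    conv_lhs => rw [← integral_condExp hm (f := fun ω => f ω * Real.exp (γ * X ω))]
    exact integral_congr_ae (condExp_mul_of_stronglyMeasurable_left hf_sm hfg_int hgint)
  have h_le2 : ∫ ω, f ω * (ℙ[fun ω' => Real.exp (γ * X ω')|m]) ω ∂ℙ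
      ≤ ∫ ω, f ω * Real.exp (γ * u ω) ∂ℙ := by
    refine integral_mono_ae (integrable_bdd_mul integrable_condExp hf_sm0 B hf0 hfB)
      (integrable_bdd_mul hγu_int hf_sm0 B hf0 hfB) ?_
    filter_upwards [hJensen] with ω h using mul_le_mul_of_nonneg_left h (hf0 ω)
  have h_eq3 : ∫ ω, f ω * Real.exp (γ * u ω) ∂ℙ
      = Real.exp (γ * C_L) * ∫ ω, f ω * Real.exp (γ * η' * W ω) ∂ℙ := by
    rw [← integral_const_mul]
    refine integral_congr_ae (Filter.Eventually.of_forall fun ω => ?_)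
    show f ω * Real.exp (γ * u ω) = Real.exp (γ * C_L) * (f ω * Real.exp (γ * η' * W ω))
    have huω : γ * u ω = γ * C_L + γ * η' * W ω := by simp only [hu_def]; ring
    rw [huω, Real.exp_add]; ring
  calc ∫ ω, f ω * Real.exp (γ * X ω) ∂ℙ
      = ∫ ω, f ω * (ℙ[fun ω' => Real.exp (γ * X ω')|m]) ω ∂ℙ := h_eq1
    _ ≤ ∫ ω, f ω * Real.exp (γ * u ω) ∂ℙ := h_le2
    _ = Real.exp (γ * C_L) * ∫ ω, f ω * Real.exp (γ * η' * W ω) ∂ℙ := h_eq3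

private lemma claim1 {Ω : Type*} {m0 : MeasurableSpace Ω} (ℙ : Measure Ω)
    [IsProbabilityMeasure ℙ] (ℱ : Filtration ℕ m0)
    {η' C_L : ℝ} (hη' : η' ∈ Set.Ico (0:ℝ) 1) (hCL : 0 ≤ C_L)
    (V : ℕ → Ω → ℝ) (hV_nonneg : ∀ k ω, 0 ≤ V k ω)
    (hV_adapted : ∀ k, StronglyMeasurable[ℱ k] (V k))
    {v₀ : ℝ} (hv₀ : 0 ≤ v₀) (hV0 : ∀ᵐ ω ∂ℙ, V 0 ω = v₀)
    (hint : ∀ k, Integrable (fun ω => Real.exp (V k ω)) ℙ)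
    (hrec : ∀ k : ℕ, 1 ≤ k → ∀ᵐ ω ∂ℙ,
      (ℙ[fun ω' => Real.exp (V k ω') | ℱ (k - 1)]) ω ≤ Real.exp (η' * V (k - 1) ω + C_L)) :
    ∀ n : ℕ, ∀ γ : ℝ, 0 ≤ γ → γ ≤ 1 →
      ∫ ω, Real.exp (γ * V n ω) ∂ℙ ≤ Real.exp (γ * η' ^ n * v₀ + γ * C_L / (1 - η')) := by
  obtain ⟨hη'0, hη'1⟩ := hη'
  have h1η : 0 < 1 - η' := by linarith
  intro n
  induction n with
  | zero =>
    intro γ hγ0 hγ1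
    have h0 : ∫ ω, Real.exp (γ * V 0 ω) ∂ℙ = Real.exp (γ * v₀) := by
      rw [integral_congr_ae (g := fun _ => Real.exp (γ * v₀))
        (hV0.mono fun ω h => by rw [h])]
      simp
    rw [h0]
    refine Real.exp_le_exp.2 ?_
    have : 0 ≤ γ * C_L / (1 - η') := by positivity
    simp only [pow_zero]
    linarith
  | succ n ih =>
    intro γ hγ0 hγ1
    rcases eq_or_lt_of_le hγ0 with h | hγpos
    · simp only [← h, zero_mul, Real.exp_zero, zero_div, zero_add]
      simp
    · have hstep := step_lemma ℙ (ℱ.le n) hη'0 hη'1.le hCL (hV_nonneg n) (hV_nonneg (n+1))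
        (hV_adapted n) ((hV_adapted (n+1)).mono (ℱ.le (n+1))).aestronglyMeasurable
        (hint n) (hint (n+1)) (by simpa using hrec (n+1) (by omega)) hγpos hγ1
        (stronglyMeasurable_const (b := (1:ℝ))) (fun _ => zero_le_one) (fun _ => le_refl (1:ℝ))
      simp only [one_mul] at hstep
      have hIH := ih (γ * η') (by positivity) (by nlinarith)
      have hgoal : ∫ ω, Real.exp (γ * V (n+1) ω) ∂ℙ ≤
          Real.exp (γ * C_L) * Real.exp (γ * η' * η' ^ n * v₀ + γ * η' * C_L / (1 - η')) := by
        refine hstep.trans ?_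
        refine mul_le_mul_of_nonneg_left ?_ (Real.exp_pos _).le
        exact hIH
      refine hgoal.trans ?_
      rw [← Real.exp_add]
      refine Real.exp_le_exp.2 (le_of_eq ?_)
      field_simp
      ring

set_option maxHeartbeats 2000000 in
private lemma claim2 {Ω : Type*} {m0 : MeasurableSpace Ω} (ℙ : Measure Ω)
    [IsProbabilityMeasure ℙ] (ℱ : Filtration ℕ m0)
    {η' C_L : ℝ} (hη' : η' ∈ Set.Ico (0:ℝ) 1) (hCL : 0 ≤ C_L)
    (V : ℕ → Ω → ℝ) (hV_nonneg : ∀ k ω, 0 ≤ V k ω)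
    (hV_adapted : ∀ k, StronglyMeasurable[ℱ k] (V k))
    {v₀ : ℝ} (hv₀ : 0 ≤ v₀) (hV0 : ∀ᵐ ω ∂ℙ, V 0 ω = v₀)
    (hint : ∀ k, Integrable (fun ω => Real.exp (V k ω)) ℙ)
    (hrec : ∀ k : ℕ, 1 ≤ k → ∀ᵐ ω ∂ℙ,
      (ℙ[fun ω' => Real.exp (V k ω') | ℱ (k - 1)]) ω ≤ Real.exp (η' * V (k - 1) ω + C_L))
    {β δ : ℝ} (hβ0 : 0 < β) (hδ1 : δ ≤ 1) (hβδ : β + δ * η' ≤ δ) :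
    ∀ n : ℕ, ∀ M : ℝ, ∀ γ : ℝ, 0 < γ → γ ≤ δ →
      ∫ ω, Real.exp (β * ∑ k ∈ Finset.range n, min (V k ω) M + γ * V n ω) ∂ℙ ≤
        Real.exp (δ * v₀ + δ * C_L * n) := by
  obtain ⟨hη'0, hη'1⟩ := hη'
  have h1η : 0 < 1 - η' := by linarith
  have hδ0 : 0 < δ := lt_of_lt_of_le hβ0 (by nlinarith)
  -- strong measurability of the truncated-sum factor
  have hf_sm : ∀ n M, StronglyMeasurable[ℱ n]
      (fun ω => Real.exp (β * ∑ k ∈ Finset.range (n+1), min (V k ω) M)) := by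
    intro n M
    refine Real.continuous_exp.comp_stronglyMeasurable (StronglyMeasurable.const_mul ?_ β)
    refine Finset.stronglyMeasurable_fun_sum _ fun k hk => ?_
    have hk' : k ≤ n := by
      have := Finset.mem_range.1 hk; omega
    exact (continuous_id.min continuous_const).comp_stronglyMeasurable ((hV_adapted k).mono (ℱ.mono hk'))
  -- boundedness of the truncated-sum factor
  have hf_bd : ∀ n M (ω : Ω), Real.exp (β * ∑ k ∈ Finset.range n, min (V k ω) M) ≤
      Real.exp (β * (n * max M 0)) := by
    intro n M ω
    refine Real.exp_le_exp.2 (mul_le_mul_of_nonneg_left ?_ hβ0.le)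
    calc ∑ k ∈ Finset.range n, min (V k ω) M ≤ ∑ _k ∈ Finset.range n, max M 0 :=
          Finset.sum_le_sum fun k _ => (min_le_right _ _).trans (le_max_left _ _)
      _ = n * max M 0 := by simp [mul_comm]
  intro n
  induction n with
  | zero =>
    intro M γ hγ0 hγδ
    have h0 : ∫ ω, Real.exp (β * ∑ k ∈ Finset.range 0, min (V k ω) M + γ * V 0 ω) ∂ℙ
        = Real.exp (γ * v₀) := by
      rw [integral_congr_ae (g := fun _ => Real.exp (γ * v₀))
        (hV0.mono fun ω h => by simp [h])]
      simp
    rw [h0]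
    refine Real.exp_le_exp.2 ?_
    have : γ * v₀ ≤ δ * v₀ := mul_le_mul_of_nonneg_right hγδ hv₀
    simp only [Nat.cast_zero, mul_zero]
    linarith
  | succ n ih =>
    intro M γ hγ0 hγδ
    have hγ1 : γ ≤ 1 := hγδ.trans hδ1
    set f : Ω → ℝ := fun ω => Real.exp (β * ∑ k ∈ Finset.range (n+1), min (V k ω) M)
      with hf_def
    have hstep := step_lemma ℙ (ℱ.le n) hη'0 hη'1.le hCL (hV_nonneg n) (hV_nonneg (n+1))
      (hV_adapted n) ((hV_adapted (n+1)).mono (ℱ.le (n+1))).aestronglyMeasurable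
      (hint n) (hint (n+1)) (by simpa using hrec (n+1) (by omega)) hγ0 hγ1
      (hf_sm n M) (fun ω => (Real.exp_pos _).le) (hf_bd (n+1) M)
    -- rewrite the goal LHS as ∫ f ω * exp (γ * V (n+1) ω)
    have hLHS : ∫ ω, Real.exp (β * ∑ k ∈ Finset.range (n+1), min (V k ω) M + γ * V (n+1) ω) ∂ℙ
        = ∫ ω, f ω * Real.exp (γ * V (n+1) ω) ∂ℙ := by
      refine integral_congr_ae (Filter.Eventually.of_forall fun ω => ?_)
      show Real.exp (β * ∑ k ∈ Finset.range (n+1), min (V k ω) M + γ * V (n+1) ω)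
          = f ω * Real.exp (γ * V (n+1) ω)
      simp only [hf_def]
      rw [← Real.exp_add]
    -- bound the inner integral by the IH integrand
    have hb : β + γ * η' ≤ δ := by nlinarith
    have hb0 : 0 < β + γ * η' := by positivity
    have hb1 : β + γ * η' ≤ 1 := hb.trans hδ1
    have hg_sm : StronglyMeasurable[m0]
        (fun ω => Real.exp (β * ∑ k ∈ Finset.range n, min (V k ω) M)) := by
      refine Real.continuous_exp.comp_stronglyMeasurable (StronglyMeasurable.const_mul ?_ β)
      refine Finset.stronglyMeasurable_fun_sum _ fun k _ => ?_
      exact (continuous_id.min continuous_const).comp_stronglyMeasurable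
        ((hV_adapted k).mono (ℱ.le k))
    have hVn_sm : AEStronglyMeasurable (V n) ℙ :=
      ((hV_adapted n).mono (ℱ.le n)).aestronglyMeasurable
    have hinner : ∫ ω, f ω * Real.exp (γ * η' * V n ω) ∂ℙ ≤
        ∫ ω, Real.exp (β * ∑ k ∈ Finset.range n, min (V k ω) M + (β + γ * η') * V n ω) ∂ℙ := by
      have hint1 : Integrable (fun ω => f ω * Real.exp (γ * η' * V n ω)) ℙ :=
        integrable_bdd_mul (exp_mul_integrable (hV_nonneg n) hVn_sm (hint n)
          (by nlinarith : γ * η' ≤ 1)) ((hf_sm n M).mono (ℱ.le n)).aestronglyMeasurable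
          _ (fun ω => (Real.exp_pos _).le) (hf_bd (n+1) M)
      have hint2 : Integrable
          (fun ω => Real.exp (β * ∑ k ∈ Finset.range n, min (V k ω) M +
            (β + γ * η') * V n ω)) ℙ := by
        have h := integrable_bdd_mul (exp_mul_integrable (hV_nonneg n) hVn_sm (hint n) hb1)
          hg_sm.aestronglyMeasurable _ (fun ω => (Real.exp_pos _).le) (hf_bd n M)
        refine h.congr (Filter.Eventually.of_forall fun ω => ?_)
        show Real.exp (β * ∑ k ∈ Finset.range n, min (V k ω) M) *
            Real.exp ((β + γ * η') * V n ω) = _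
        rw [← Real.exp_add]
      refine integral_mono_ae hint1 hint2 ?_
      refine Filter.Eventually.of_forall fun ω => ?_
      show f ω * Real.exp (γ * η' * V n ω) ≤
        Real.exp (β * ∑ k ∈ Finset.range n, min (V k ω) M + (β + γ * η') * V n ω)
      have hsplit : (∑ k ∈ Finset.range (n+1), min (V k ω) M)
          = (∑ k ∈ Finset.range n, min (V k ω) M) + min (V n ω) M :=
        Finset.sum_range_succ _ _
      have hfω : f ω * Real.exp (γ * η' * V n ω)
          = Real.exp (β * ∑ k ∈ Finset.range n, min (V k ω) M +
              (β * min (V n ω) M + γ * η' * V n ω)) := by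
        simp only [hf_def]
        rw [← Real.exp_add, hsplit]
        ring_nf
      rw [hfω]
      refine Real.exp_le_exp.2 ?_
      have hmin : min (V n ω) M ≤ V n ω := min_le_left _ _
      nlinarith [hV_nonneg n ω]
    have hIH := ih M (β + γ * η') hb0 hb
    calc ∫ ω, Real.exp (β * ∑ k ∈ Finset.range (n+1), min (V k ω) M + γ * V (n+1) ω) ∂ℙ
        = ∫ ω, f ω * Real.exp (γ * V (n+1) ω) ∂ℙ := hLHS
      _ ≤ Real.exp (γ * C_L) * ∫ ω, f ω * Real.exp (γ * η' * V n ω) ∂ℙ := hstep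
      _ ≤ Real.exp (γ * C_L) * ∫ ω, Real.exp (β * ∑ k ∈ Finset.range n, min (V k ω) M +
            (β + γ * η') * V n ω) ∂ℙ := mul_le_mul_of_nonneg_left hinner (Real.exp_pos _).le
      _ ≤ Real.exp (γ * C_L) * Real.exp (δ * v₀ + δ * C_L * n) :=
          mul_le_mul_of_nonneg_left hIH (Real.exp_pos _).le
      _ ≤ Real.exp (δ * v₀ + δ * C_L * (n+1 : ℕ)) := by
          rw [← Real.exp_add]
          refine Real.exp_le_exp.2 ?_
          have : γ * C_L ≤ δ * C_L := mul_le_mul_of_nonneg_right hγδ hCL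
          push_cast
          linarith


set_option maxHeartbeats 1000000 in
/-- Proposition 6.1: iterated exponential Lyapunov bounds. If
`E[exp(V_k) | ℱ_{k-1}] ≤ exp(η' V_{k-1} + C_L)` a.s. with `η' ∈ [0,1)` and `V₀ = v₀` a.s., then
(i) `E exp(ηp V_n) ≤ exp(pη(η')ⁿ v₀ + pκ C_L)` whenever `ηp ≤ 1`, and
(ii) `E exp(ηp Σ_{k=0}^n V_k) ≤ exp(pκ v₀ + pκ C_L n)` whenever `κp ≤ 1`, where
`κ = η/(1-η')`. -/
theorem stmt5 {Ω : Type*} {m0 : MeasurableSpace Ω} (ℙ : Measure Ω) [IsProbabilityMeasure ℙ]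
    (ℱ : Filtration ℕ m0)
    {η' C_L : ℝ} (hη' : η' ∈ Set.Ico (0:ℝ) 1) (hCL : 0 ≤ C_L)
    (V : ℕ → Ω → ℝ) (hV_nonneg : ∀ k ω, 0 ≤ V k ω)
    (hV_adapted : ∀ k, StronglyMeasurable[ℱ k] (V k))
    {v₀ : ℝ} (hv₀ : 0 ≤ v₀) (hV0 : ∀ᵐ ω ∂ℙ, V 0 ω = v₀)
    (hint : ∀ k, Integrable (fun ω => Real.exp (V k ω)) ℙ)
    (hrec : ∀ k : ℕ, 1 ≤ k → ∀ᵐ ω ∂ℙ,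
      (ℙ[fun ω' => Real.exp (V k ω') | ℱ (k - 1)]) ω ≤ Real.exp (η' * V (k - 1) ω + C_L)) :
    (∀ η p : ℝ, 0 < η → 0 < p → η * p ≤ 1 → ∀ n : ℕ,
      ∫⁻ ω, ENNReal.ofReal (Real.exp (η * p * V n ω)) ∂ℙ ≤
        ENNReal.ofReal (Real.exp (p * η * η' ^ n * v₀ + p * (η / (1 - η')) * C_L))) ∧
    (∀ η p : ℝ, 0 < η → 0 < p → (η / (1 - η')) * p ≤ 1 → ∀ n : ℕ,
      ∫⁻ ω, ENNReal.ofReal (Real.exp (η * p * ∑ k ∈ Finset.range (n + 1), V k ω)) ∂ℙ ≤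
        ENNReal.ofReal (Real.exp (p * (η / (1 - η')) * v₀ + p * (η / (1 - η')) * C_L * n))) := by
  have h1η : 0 < 1 - η' := by linarith [hη'.2]
  have hVm : ∀ k, Measurable (V k) := fun k => ((hV_adapted k).mono (ℱ.le k)).measurable
  constructor
  · -- part (i)
    intro η p hη hp hηp n
    have hγ0 : 0 < η * p := mul_pos hη hp
    have hInt : Integrable (fun ω => Real.exp (η * p * V n ω)) ℙ :=
      exp_mul_integrable (hV_nonneg n) ((hV_adapted n).mono (ℱ.le n)).aestronglyMeasurable
        (hint n) hηp
    rw [← MeasureTheory.ofReal_integral_eq_lintegral_ofReal hInt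
      (Filter.Eventually.of_forall fun ω => (Real.exp_pos _).le)]
    refine ENNReal.ofReal_le_ofReal ?_
    have h := claim1 ℙ ℱ hη' hCL V hV_nonneg hV_adapted hv₀ hV0 hint hrec n (η * p) hγ0.le hηp
    refine h.trans (Real.exp_le_exp.2 (le_of_eq ?_))
    have hne : (1 - η') ≠ 0 := ne_of_gt h1η
    field_simp
  · -- part (ii)
    intro η p hη hp hκp n
    set δ : ℝ := η / (1 - η') * p with hδ_def
    set β : ℝ := η * p with hβ_def
    have hδ0 : 0 < δ := mul_pos (div_pos hη h1η) hp
    have hβ0 : 0 < β := mul_pos hη hp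
    have hβeq : β = δ * (1 - η') := by
      rw [hβ_def, hδ_def]; field_simp
    have hδη : 0 ≤ δ * η' := mul_nonneg hδ0.le hη'.1
    have hβδ : β + δ * η' ≤ δ := by rw [hβeq]; ring_nf; linarith
    have hβle : β ≤ δ := by rw [hβeq]; nlinarith
    have hβ1 : β ≤ 1 := hβle.trans hκp
    have hclaim := claim2 ℙ ℱ hη' hCL V hV_nonneg hV_adapted hv₀ hV0 hint hrec
      hβ0 hκp hβδ n
    set g : ℕ → Ω → ℝ≥0∞ := fun M ω =>
      ENNReal.ofReal (Real.exp (β * ∑ k ∈ Finset.range n, min (V k ω) (M : ℝ) + β * V n ω))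
      with hg_def
    have hkey : ∀ ω, (⨆ M : ℕ, g M ω)
        = ENNReal.ofReal (Real.exp (η * p * ∑ k ∈ Finset.range (n + 1), V k ω)) := by
      intro ω
      have hsplit : ∑ k ∈ Finset.range (n + 1), V k ω
          = ∑ k ∈ Finset.range n, V k ω + V n ω := Finset.sum_range_succ _ _
      apply le_antisymm
      · refine iSup_le fun M => ENNReal.ofReal_le_ofReal (Real.exp_le_exp.2 ?_)
        have h1 : ∑ k ∈ Finset.range n, min (V k ω) (M : ℝ) ≤ ∑ k ∈ Finset.range n, V k ω :=
          Finset.sum_le_sum fun k _ => min_le_left _ _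
        have h2 := mul_le_mul_of_nonneg_left h1 hβ0.le
        rw [hsplit, ← hβ_def]
        linarith
      · set c : ℝ := ∑ k ∈ Finset.range n, V k ω with hc_def
        have hc : ∀ k ∈ Finset.range n, V k ω ≤ ((⌈c⌉₊ : ℕ) : ℝ) := by
          intro k hk
          calc V k ω ≤ c := Finset.single_le_sum (fun j _ => hV_nonneg j ω) hk
            _ ≤ (⌈c⌉₊ : ℝ) := Nat.le_ceil c
        have heq : ENNReal.ofReal (Real.exp (η * p * ∑ k ∈ Finset.range (n + 1), V k ω))
            = g ⌈c⌉₊ ω := by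
          simp only [hg_def]
          congr 1
          rw [Finset.sum_congr rfl fun k hk => min_eq_left (hc k hk), hsplit, ← hβ_def]
          rw [← hc_def]; ring_nf
        rw [heq]
        exact le_iSup (fun M : ℕ => g M ω) ⌈c⌉₊
    have hmono : ∀ ω, Monotone fun M : ℕ => g M ω := by
      intro ω M M' hMM'
      refine ENNReal.ofReal_le_ofReal (Real.exp_le_exp.2 ?_)
      have h1 : ∑ k ∈ Finset.range n, min (V k ω) (M : ℝ)
          ≤ ∑ k ∈ Finset.range n, min (V k ω) (M' : ℝ) :=
        Finset.sum_le_sum fun k _ => min_le_min (le_refl _) (Nat.cast_le.2 hMM')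
      have h2 := mul_le_mul_of_nonneg_left h1 hβ0.le
      linarith
    have hmeas : ∀ M : ℕ, Measurable (g M) := by
      intro M
      refine Measurable.ennreal_ofReal (Real.measurable_exp.comp ?_)
      exact ((Finset.measurable_sum _ fun k _ => (hVm k).min measurable_const).const_mul β).add
        ((hVm n).const_mul β)
    have hIntM : ∀ M : ℕ, Integrable
        (fun ω => Real.exp (β * ∑ k ∈ Finset.range n, min (V k ω) (M : ℝ) + β * V n ω)) ℙ := by
      intro M
      have hg_sm : StronglyMeasurable[m0]
          (fun ω => Real.exp (β * ∑ k ∈ Finset.range n, min (V k ω) (M : ℝ))) := by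
        refine Real.continuous_exp.comp_stronglyMeasurable (StronglyMeasurable.const_mul ?_ β)
        refine Finset.stronglyMeasurable_fun_sum _ fun k _ => ?_
        exact (continuous_id.min continuous_const).comp_stronglyMeasurable
          ((hV_adapted k).mono (ℱ.le k))
      have hbd : ∀ ω, Real.exp (β * ∑ k ∈ Finset.range n, min (V k ω) (M : ℝ))
          ≤ Real.exp (β * (n * max (M : ℝ) 0)) := by
        intro ω
        refine Real.exp_le_exp.2 (mul_le_mul_of_nonneg_left ?_ hβ0.le)
        calc ∑ k ∈ Finset.range n, min (V k ω) (M : ℝ)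
            ≤ ∑ _k ∈ Finset.range n, max (M : ℝ) 0 :=
              Finset.sum_le_sum fun k _ => (min_le_right _ _).trans (le_max_left _ _)
          _ = n * max (M : ℝ) 0 := by simp [mul_comm]
      have h := integrable_bdd_mul (exp_mul_integrable (hV_nonneg n)
        ((hV_adapted n).mono (ℱ.le n)).aestronglyMeasurable (hint n) hβ1)
        hg_sm.aestronglyMeasurable _ (fun ω => (Real.exp_pos _).le) hbd
      refine h.congr (Filter.Eventually.of_forall fun ω => ?_)
      show Real.exp (β * ∑ k ∈ Finset.range n, min (V k ω) (M : ℝ)) *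
          Real.exp (β * V n ω) = _
      rw [← Real.exp_add]
    calc ∫⁻ ω, ENNReal.ofReal (Real.exp (η * p * ∑ k ∈ Finset.range (n + 1), V k ω)) ∂ℙ
        = ∫⁻ ω, ⨆ M : ℕ, g M ω ∂ℙ := lintegral_congr fun ω => (hkey ω).symm
      _ = ⨆ M : ℕ, ∫⁻ ω, g M ω ∂ℙ :=
          lintegral_iSup' (fun M => (hmeas M).aemeasurable)
            (Filter.Eventually.of_forall hmono)
      _ ≤ ENNReal.ofReal (Real.exp (δ * v₀ + δ * C_L * n)) := by
          refine iSup_le fun M => ?_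
          rw [hg_def]
          rw [← MeasureTheory.ofReal_integral_eq_lintegral_ofReal (hIntM M)
            (Filter.Eventually.of_forall fun ω => (Real.exp_pos _).le)]
          exact ENNReal.ofReal_le_ofReal (hclaim (M : ℝ) β hβ0 hβle)
      _ = ENNReal.ofReal
          (Real.exp (p * (η / (1 - η')) * v₀ + p * (η / (1 - η')) * C_L * n)) := by
          congr 1
          rw [hδ_def]
          ring
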